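/- For every n and every K ⊆ [2, n+1], with τ(i) = n+3−i, the following identity holds: Σ_{J ⊆ [2,n+1]∖K} (−1)^{n−|K∪J|} α(τ(J))!̂ = Σ_{J ⊆ K} (−1)^{|K∖J|} α(J)!̂. -/

import Mathlib

open Finset

/-- Positions of descents of a permutation of `Fin (n+1)` in one-line notation. -/
def descSet (n : ℕ) (σ : Equiv.Perm (Fin (n+1))) : Finset (Fin n) :=
  Finset.univ.filter (fun i : Fin n => σ i.succ < σ i.castSucc)

/-- Number of descents. -/
def des (n : ℕ) (σ : Equiv.Perm (Fin (n+1))) : ℕ := (descSet n σ).card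

/-- Descent top set, with values written 1-based (so `DT n σ ⊆ [2, n+1]`). -/
def DT (n : ℕ) (σ : Equiv.Perm (Fin (n+1))) : Finset ℕ :=
  (descSet n σ).image (fun i => (σ i.castSucc : ℕ) + 1)

/-- `β!̂ = (k+1)^{β₁} k^{β₂} ⋯ 2^{β_k}` for a tuple `β` of length `k`. -/
def hatFac (β : List ℕ) : ℕ :=
  (β.zipIdx.map (fun p => (β.length + 1 - p.2) ^ p.1)).prod

/-- `α(X)!̂` where, for `X = {x₁ < … < x_k}`, `α(X) = (x₁ - 1, x₂ - x₁, …, x_k - x_{k-1})`. -/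
def alphaHat (X : Finset ℕ) : ℕ :=
  hatFac (List.zipWith (fun a b => b - a) (1 :: X.sort (· ≤ ·)) (X.sort (· ≤ ·)))


lemma powerset_erase (P : Finset ℕ) (x : ℕ) :
    (P.erase x).powerset = P.powerset.filter (fun T => x ∉ T) := by
  ext T
  simp only [Finset.mem_powerset, Finset.mem_filter, Finset.subset_erase]

lemma pairs0 (P : Finset ℕ) (F : ℕ → Finset ℕ → ℤ) :
    ∑ x ∈ P, ∑ T ∈ (P.erase x).powerset, F x T
      = ∑ T ∈ P.powerset, ∑ x ∈ P \ T, F x T := by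
  have h1 : ∀ x ∈ P, ∑ T ∈ (P.erase x).powerset, F x T
      = ∑ T ∈ P.powerset, if x ∉ T then F x T else 0 := by
    intro x _
    rw [powerset_erase, Finset.sum_filter]
  rw [Finset.sum_congr rfl h1, Finset.sum_comm]
  apply Finset.sum_congr rfl
  intro T hT
  rw [Finset.sdiff_eq_filter, Finset.sum_filter]

lemma sum_powerset_image (K : Finset ℕ) (f : ℕ → ℕ) (hf : Set.InjOn f ↑K)
    (g : Finset ℕ → ℤ) :
    ∑ J ∈ (K.image f).powerset, g J = ∑ J ∈ K.powerset, g (J.image f) := by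
  have h1 : (K.image f).powerset = K.powerset.image (fun J => J.image f) := by
    ext J
    simp only [Finset.mem_powerset, Finset.mem_image]
    constructor
    · intro h
      obtain ⟨s, hs, rfl⟩ := Finset.subset_image_iff.mp h
      exact ⟨s, hs, rfl⟩
    · rintro ⟨s, hs, rfl⟩
      exact Finset.image_subset_image hs
  rw [h1, Finset.sum_image]
  intro s hs u hu h
  have hs' := Finset.mem_powerset.mp hs
  have hu' := Finset.mem_powerset.mp hu
  apply Finset.ext
  intro a
  constructor
  · intro ha
    have : f a ∈ u.image f := (show s.image f = u.image f from h) ▸ Finset.mem_image_of_mem f ha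
    obtain ⟨b, hb, hfb⟩ := Finset.mem_image.mp this
    rwa [← hf (hu' hb) (hs' ha) hfb]
  · intro ha
    have : f a ∈ s.image f := (show s.image f = u.image f from h) ▸ Finset.mem_image_of_mem f ha
    obtain ⟨b, hb, hfb⟩ := Finset.mem_image.mp this
    rwa [← hf (hs' hb) (hu' ha) hfb]

lemma neg_one_pow_pred (a : ℕ) (ha : 1 ≤ a) : ((-1:ℤ))^(a-1) = -(-1:ℤ)^a := by
  obtain ⟨b, rfl⟩ := Nat.exists_eq_add_of_le ha
  rw [show 1 + b - 1 = b by omega, pow_add, pow_one]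
  ring

def chainProd : ℕ → List ℕ → ℕ
  | _, [] => 1
  | prev, a :: l => (l.length + 2) ^ (a - prev) * chainProd a l

lemma map_enumFrom_pow (β : List ℕ) (c : ℕ) : ∀ n,
    List.map (fun p => (c + 1 - p.2) ^ p.1) (List.zipIdx β (n+1))
      = List.map (fun p => (c - p.2) ^ p.1) (List.zipIdx β n) := by
  induction β with
  | nil => intro n; rfl
  | cons a l ih =>
    intro n
    simp only [List.zipIdx_cons, List.map_cons, ih (n+1)]
    congr 2
    omega

lemma hatFac_cons (x : ℕ) (β : List ℕ) :
    hatFac (x :: β) = (β.length + 2) ^ x * hatFac β := by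
  simp only [hatFac, List.zipIdx_cons, List.length_cons]
  simp only [List.map_cons, List.prod_cons]
  rw [congrArg List.prod (map_enumFrom_pow β (β.length + 1) 0)]
  norm_num

lemma zip_hatFac : ∀ (L : List ℕ) (prev : ℕ),
    hatFac (List.zipWith (fun a b => b - a) (prev :: L) L) = chainProd prev L := by
  intro L
  induction L with
  | nil => intro prev; simp [hatFac, chainProd]
  | cons a l ih =>
    intro prev
    show hatFac ((a - prev) :: List.zipWith (fun a b => b - a) (a :: l) l) = _
    rw [hatFac_cons, ih a]
    have hlen : (List.zipWith (fun a b => b - a) (a :: l) l).length = l.length := by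
      simp [List.length_zipWith]
    rw [hlen]
    rfl

lemma alphaHat_eq_chainProd (X : Finset ℕ) :
    alphaHat X = chainProd 1 (X.sort (· ≤ ·)) := zip_hatFac _ 1

lemma alphaHat_empty : alphaHat ∅ = 1 := by
  rw [alphaHat_eq_chainProd, Finset.sort_empty]; rfl

lemma chainProd_cons (prev a : ℕ) (l : List ℕ) :
    chainProd prev (a :: l) = (l.length + 2) ^ (a - prev) * chainProd a l := rfl

lemma chainProd_shift : ∀ (L : List ℕ) (p : ℕ), (∀ m ∈ L, 1 ≤ m) →
    chainProd (p+1) L = chainProd p (L.map (· - 1)) := by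
  intro L
  induction L with
  | nil => intros; rfl
  | cons a l ih =>
    intro p hm
    have ha : 1 ≤ a := hm a (by simp)
    simp only [List.map_cons, chainProd_cons, List.length_map]
    have h1 : a - (p+1) = a - 1 - p := by omega
    have h2 : chainProd a l = chainProd (a-1) (l.map (· - 1)) := by
      have := ih (a-1) (fun m hm' => hm m (by simp [hm']))
      rwa [Nat.sub_add_cancel ha] at this
    rw [h1, h2]

lemma chainProd_two : ∀ (L : List ℕ), (∀ m ∈ L, 2 ≤ m) →
    chainProd 1 L = (L.length + 1) * chainProd 2 L := by
  intro L hm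
  cases L with
  | nil => rfl
  | cons a l =>
    simp only [chainProd_cons, List.length_cons]
    have ha : 2 ≤ a := hm a (by simp)
    have : a - 1 = (a - 2) + 1 := by omega
    rw [this, pow_succ]
    ring

lemma sort_min_two (X : Finset ℕ) (h2 : 2 ∈ X) (hX : ∀ x ∈ X, 2 ≤ x) :
    X.sort (· ≤ ·) = 2 :: (X.erase 2).sort (· ≤ ·) := by
  conv_lhs => rw [← Finset.insert_erase h2]
  exact Finset.sort_insert _ (fun b hb => hX b (Finset.mem_of_mem_erase hb))
    (Finset.notMem_erase _ _)

lemma sort_image_sub_one (X : Finset ℕ) (hX : ∀ x ∈ X, 3 ≤ x) :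
    (X.image (· - 1)).sort (· ≤ ·) = (X.sort (· ≤ ·)).map (· - 1) := by
  have hinj : Set.InjOn (· - 1) ↑X := by
    intro a ha b hb hab
    have := hX a ha; have := hX b hb
    simp only at hab; omega
  refine List.Perm.eq_of_pairwise' (r := ((· ≤ ·) : ℕ → ℕ → Prop)) ?_ ?_ ?_
  rotate_right
  · rw [← Multiset.coe_eq_coe]
    rw [Finset.sort_eq, Finset.image_val_of_injOn hinj, ← Multiset.map_coe,
      Finset.sort_eq]
  · exact Finset.pairwise_sort _ _
  · exact List.Pairwise.map _ (fun a b (h : a ≤ b) => Nat.sub_le_sub_right h 1)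
      (Finset.pairwise_sort _ _)

lemma alphaHat_rec (X : Finset ℕ) (hX : ∀ x ∈ X, 2 ≤ x) :
    alphaHat X = (X.card + 1) * alphaHat ((X.erase 2).image (· - 1)) := by
  by_cases h2 : 2 ∈ X
  · have h3 : ∀ x ∈ X.erase 2, 3 ≤ x := by
      intro x hx
      have := hX x (Finset.mem_of_mem_erase hx)
      have := Finset.ne_of_mem_erase hx
      omega
    have h1' : ∀ m ∈ (X.erase 2).sort (· ≤ ·), 1 ≤ m := by
      intro m hm
      have := h3 m ((Finset.mem_sort _).mp hm); omega
    rw [alphaHat_eq_chainProd, sort_min_two X h2 hX, chainProd_cons]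
    rw [alphaHat_eq_chainProd, sort_image_sub_one _ h3]
    rw [← chainProd_shift _ 1 h1']
    rw [Finset.length_sort, Finset.card_erase_of_mem h2]
    have hc : 1 ≤ X.card := Finset.card_pos.mpr ⟨2, h2⟩
    have : X.card - 1 + 2 = X.card + 1 := by omega
    rw [this]
    norm_num
  · have h3 : ∀ x ∈ X, 3 ≤ x := by
      intro x hx
      have := hX x hx
      rcases Nat.lt_or_ge x 3 with h | h
      · interval_cases x <;> simp_all
      · exact h
    have h2' : ∀ m ∈ X.sort (· ≤ ·), 2 ≤ m := by
      intro m hm; have := h3 m ((Finset.mem_sort _).mp hm); omega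
    have h1' : ∀ m ∈ X.sort (· ≤ ·), 1 ≤ m := fun m hm => le_trans (by norm_num) (h2' m hm)
    rw [Finset.erase_eq_of_notMem h2]
    rw [alphaHat_eq_chainProd, chainProd_two _ h2', chainProd_shift _ 1 h1']
    rw [alphaHat_eq_chainProd, sort_image_sub_one _ h3, Finset.length_sort]

noncomputable def shF (X : Finset ℕ) : Finset ℕ := (X.erase 2).image (· - 1)

lemma alphaHat_rec' (X : Finset ℕ) (hX : ∀ x ∈ X, 2 ≤ x) :
    alphaHat X = (X.card + 1) * alphaHat (shF X) := alphaHat_rec X hX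

lemma shF_insert_of_ge (X : Finset ℕ) {m : ℕ} (hm : 3 ≤ m) :
    shF (insert m X) = insert (m-1) (shF X) := by
  unfold shF
  rw [Finset.erase_insert_of_ne (by omega), Finset.image_insert]

lemma mem_shF_iff (X : Finset ℕ) (hX : ∀ x ∈ X, 2 ≤ x) {y : ℕ} (hy : 2 ≤ y) :
    y ∈ shF X ↔ y + 1 ∈ X := by
  unfold shF
  simp only [Finset.mem_image, Finset.mem_erase]
  constructor
  · rintro ⟨x, ⟨hx2, hxX⟩, rfl⟩
    have := hX x hxX
    have hxx : x = x - 1 + 1 := by omega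
    rwa [← hxx]
  · intro h
    exact ⟨y+1, ⟨by omega, h⟩, by omega⟩

lemma shF_card (X : Finset ℕ) (hX : ∀ x ∈ X, 2 ≤ x) (h2 : 2 ∈ X) :
    (shF X).card = X.card - 1 := by
  unfold shF
  rw [Finset.card_image_of_injOn, Finset.card_erase_of_mem h2]
  intro a ha b hb hab
  simp only [Finset.mem_coe, Finset.mem_erase] at ha hb
  have := hX a ha.2; have := hX b hb.2
  have h3a : 3 ≤ a := by omega
  have h3b : 3 ≤ b := by omega
  simp only at hab; omega

lemma shF_card' (X : Finset ℕ) (hX : ∀ x ∈ X, 2 ≤ x) (h2 : 2 ∉ X) :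
    (shF X).card = X.card := by
  unfold shF
  rw [Finset.erase_eq_of_notMem h2, Finset.card_image_of_injOn]
  intro a ha b hb hab
  simp only [Finset.mem_coe] at ha hb
  have ha2 := hX a ha; have hb2 := hX b hb
  have hane : a ≠ 2 := fun h => h2 (h ▸ ha)
  have hbne : b ≠ 2 := fun h => h2 (h ▸ hb)
  have h3a : 3 ≤ a := by omega
  have h3b : 3 ≤ b := by omega
  simp only at hab; omega

lemma A1 : ∀ n, 1 ≤ n → ∀ X ⊆ Finset.Icc 2 n,
    alphaHat (insert (n+1) X) = 2 * alphaHat X + ∑ x ∈ Finset.Icc 2 n, alphaHat (insert x X) := by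
  intro n
  induction n with
  | zero => omega
  | succ n ih =>
    intro _ X hX
    rcases Nat.eq_zero_or_pos n with rfl | hn
    · have hX0 : X = ∅ := by
        have he : Finset.Icc 2 1 = (∅ : Finset ℕ) := by decide
        rw [he] at hX
        exact Finset.subset_empty.mp hX
      subst hX0
      have h1 : Finset.Icc 2 1 = (∅ : Finset ℕ) := by decide
      have h2 : alphaHat {2} = 2 := by
        have h := alphaHat_rec {2} (by intro x hx; simp at hx; omega)
        have he : ({2} : Finset ℕ).erase 2 = ∅ := by simp
        rw [he, Finset.image_empty, alphaHat_empty, mul_one, Finset.card_singleton] at h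
        exact h
      rw [h1]
      norm_num [alphaHat_empty]
      exact h2
    have hXel : ∀ x ∈ X, 2 ≤ x := fun x hx => (Finset.mem_Icc.mp (hX hx)).1
    have hXub : ∀ x ∈ X, x ≤ n+1 := fun x hx => (Finset.mem_Icc.mp (hX hx)).2
    set Y := shF X with hYdef
    have hYel : Y ⊆ Finset.Icc 2 n := by
      intro y hy
      simp only [hYdef, shF, Finset.mem_image, Finset.mem_erase] at hy
      obtain ⟨x, ⟨hx2, hxX⟩, rfl⟩ := hy
      have := hXel x hxX; have := hXub x hxX
      simp only [Finset.mem_Icc]; omega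
    have hmemY : ∀ y, 2 ≤ y → (y ∈ Y ↔ y + 1 ∈ X) := fun y hy => mem_shF_iff X hXel hy
    set t := alphaHat Y with htdef
    set S := ∑ y ∈ Finset.Icc 2 n, alphaHat (insert y Y) with hSdef
    have hIH : alphaHat (insert (n+1) Y) = 2 * t + S := ih hn Y hYel
    set k := X.card with hkdef
    have haX : alphaHat X = (k+1) * t := alphaHat_rec' X hXel
    have bridge : ∀ y ∈ Finset.Icc 2 n,
        alphaHat (insert (y+1) X) + (if y ∈ Y then t else 0)
          = (k + 2) * alphaHat (insert y Y) := by
      intro y hy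
      have hy2 : 2 ≤ y := (Finset.mem_Icc.mp hy).1
      by_cases hyY : y ∈ Y
      · have hyX : y + 1 ∈ X := (hmemY y hy2).mp hyY
        rw [Finset.insert_eq_self.mpr hyX, Finset.insert_eq_self.mpr hyY, if_pos hyY, haX]
        ring
      · have hyX : y + 1 ∉ X := fun h => hyY ((hmemY y hy2).mpr h)
        rw [if_neg hyY]
        have hrec := alphaHat_rec' (insert (y+1) X)
          (by intro x hx; rcases Finset.mem_insert.mp hx with rfl | hx
              · omega
              · exact hXel x hx)
        rw [Finset.card_insert_of_notMem hyX, ← hkdef] at hrec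
        rw [shF_insert_of_ge X (by omega : 3 ≤ y+1), show y+1-1 = y from rfl, ← hYdef] at hrec
        rw [hrec]
        ring
    have hsum : (∑ y ∈ Finset.Icc 2 n, alphaHat (insert (y+1) X)) + Y.card * t
        = (k+2) * S := by
      have h1 := Finset.sum_congr rfl bridge
      rw [Finset.sum_add_distrib, Finset.sum_ite_mem, ← Finset.mul_sum] at h1
      rw [Finset.inter_comm, (Finset.inter_eq_left).mpr hYel] at h1
      rw [Finset.sum_const, smul_eq_mul, mul_comm Y.card t] at h1
      rw [hSdef]
      rw [mul_comm Y.card t]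
      exact h1
    have hsplit : ∑ x ∈ Finset.Icc 2 (n+1), alphaHat (insert x X)
        = alphaHat (insert 2 X) + ∑ y ∈ Finset.Icc 2 n, alphaHat (insert (y+1) X) := by
      have h23 : Finset.Icc 2 (n+1) = insert 2 (Finset.Icc 3 (n+1)) := by
        ext a; simp [Finset.mem_Icc]; omega
      rw [h23, Finset.sum_insert (by simp [Finset.mem_Icc])]
      congr 1
      have himg : Finset.Icc 3 (n+1) = (Finset.Icc 2 n).image (· + 1) := by
        ext a; simp only [Finset.mem_Icc, Finset.mem_image]
        constructor
        · intro h; exact ⟨a-1, by omega, by omega⟩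
        · rintro ⟨b, hb, rfl⟩; omega
      rw [himg, Finset.sum_image (by intro a _ b _ h; simp only at h; omega)]
    have htop : alphaHat (insert (n+2) X) = (k+2) * alphaHat (insert (n+1) Y) := by
      have hnotin : n+2 ∉ X := fun h => by have := hXub _ h; omega
      have hrec := alphaHat_rec' (insert (n+2) X)
        (by intro x hx; rcases Finset.mem_insert.mp hx with rfl | hx
            · omega
            · exact hXel x hx)
      rw [Finset.card_insert_of_notMem hnotin, ← hkdef] at hrec
      rw [shF_insert_of_ge X (by omega : 3 ≤ n+2), show n+2-1 = n+1 from rfl, ← hYdef] at hrec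
      exact hrec
    rw [show n+1+1 = n+2 from rfl, htop, hIH, hsplit]
    by_cases h2X : 2 ∈ X
    · have hk1 : 1 ≤ k := Finset.card_pos.mpr ⟨2, h2X⟩
      have hYcard : Y.card = k - 1 := shF_card X hXel h2X
      have h2ins : alphaHat (insert 2 X) = (k+1) * t := by
        rw [Finset.insert_eq_self.mpr h2X, haX]
      rw [h2ins, haX]
      rw [hYcard] at hsum
      zify [hk1] at hsum ⊢
      linear_combination -hsum
    · have hYcard : Y.card = k := shF_card' X hXel h2X
      have h2ins : alphaHat (insert 2 X) = (k+2) * t := by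
        have hrec := alphaHat_rec' (insert 2 X)
          (by intro x hx; rcases Finset.mem_insert.mp hx with rfl | hx
              · omega
              · exact hXel x hx)
        rw [Finset.card_insert_of_notMem h2X, ← hkdef] at hrec
        have hsh : shF (insert 2 X) = Y := by
          unfold shF
          rw [Finset.erase_insert h2X, hYdef]
          unfold shF
          rw [Finset.erase_eq_of_notMem h2X]
        rw [hsh] at hrec
        exact hrec
      rw [h2ins, haX]
      rw [hYcard] at hsum
      zify at hsum ⊢
      linear_combination -hsum

noncomputable def Dsum (K : Finset ℕ) : ℤ :=
  ∑ J ∈ K.powerset, (-1:ℤ)^(K.card - J.card) * (alphaHat J : ℤ)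

lemma Dsum_empty : Dsum ∅ = 1 := by
  simp [Dsum, alphaHat_empty]

lemma E1 (P : Finset ℕ) (x : ℕ) (hx : x ∉ P) :
    Dsum (insert x P) = ∑ T ∈ P.powerset,
      (-1:ℤ)^(P.card - T.card) * ((alphaHat (insert x T) : ℤ) - alphaHat T) := by
  unfold Dsum
  rw [Finset.sum_powerset_insert hx]
  rw [← Finset.sum_add_distrib]
  apply Finset.sum_congr rfl
  intro T hT
  have hTP : T ⊆ P := Finset.mem_powerset.mp hT
  have hxT : x ∉ T := fun h => hx (hTP h)
  have hc1 : (insert x P).card = P.card + 1 := Finset.card_insert_of_notMem hx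
  have hc2 : (insert x T).card = T.card + 1 := Finset.card_insert_of_notMem hxT
  have hle : T.card ≤ P.card := Finset.card_le_card hTP
  rw [hc1, hc2]
  rw [show P.card + 1 - T.card = (P.card - T.card) + 1 by omega]
  rw [show P.card + 1 - (T.card + 1) = P.card - T.card by omega]
  rw [pow_succ]
  ring

lemma Dsum_sh (K : Finset ℕ) (hK : ∀ x ∈ K, 2 ≤ x) (h2 : 2 ∈ K) :
    Dsum K = Dsum ((K.erase 2).image (· - 1)) := by
  set E := K.erase 2 with hEdef
  have hKE : K = insert 2 E := (Finset.insert_erase h2).symm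
  have h2E : 2 ∉ E := Finset.notMem_erase _ _
  have hE3 : ∀ x ∈ E, 3 ≤ x := by
    intro x hx
    have h := hK x (Finset.mem_of_mem_erase hx)
    have := Finset.ne_of_mem_erase hx
    omega
  have hinj : Set.InjOn (· - 1) ↑E := by
    intro a ha b hb hab
    have := hE3 a ha; have := hE3 b hb
    simp only at hab; omega
  have hcardE : (E.image (· - 1)).card = E.card := Finset.card_image_of_injOn hinj
  have hRHS : Dsum (E.image (· - 1))
      = ∑ J ∈ E.powerset,
          (-1:ℤ)^(E.card - J.card) * alphaHat (J.image (· - 1)) := by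
    rw [Dsum, sum_powerset_image _ _ hinj]
    apply Finset.sum_congr rfl
    intro J hJ
    have hJE : J ⊆ E := Finset.mem_powerset.mp hJ
    have hinjJ : Set.InjOn (· - 1) ↑J := hinj.mono (by exact_mod_cast hJE)
    rw [hcardE, Finset.card_image_of_injOn hinjJ]
  rw [hRHS, hKE, Dsum, Finset.sum_powerset_insert h2E, ← Finset.sum_add_distrib]
  apply Finset.sum_congr rfl
  intro J hJ
  have hJE : J ⊆ E := Finset.mem_powerset.mp hJ
  have h2J : 2 ∉ J := fun h => h2E (hJE h)
  have hJ3 : ∀ x ∈ J, 3 ≤ x := fun x hx => hE3 x (hJE hx)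
  have hinjJ : Set.InjOn (· - 1) ↑J := hinj.mono (by exact_mod_cast hJE)
  have hcardJ : (J.image (· - 1)).card = J.card := Finset.card_image_of_injOn hinjJ
  have hle : J.card ≤ E.card := Finset.card_le_card hJE
  have hrec1 : alphaHat J = (J.card + 1) * alphaHat (J.image (· - 1)) := by
    have := alphaHat_rec J (fun x hx => by have := hJ3 x hx; omega)
    rwa [Finset.erase_eq_of_notMem h2J] at this
  have hrec2 : alphaHat (insert 2 J) = (J.card + 2) * alphaHat (J.image (· - 1)) := by
    have := alphaHat_rec (insert 2 J)
      (by intro x hx; rcases Finset.mem_insert.mp hx with rfl | hx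
          · omega
          · have := hJ3 x hx; omega)
    rwa [Finset.erase_insert h2J, Finset.card_insert_of_notMem h2J] at this
  have hcK : (insert 2 E).card = E.card + 1 := Finset.card_insert_of_notMem h2E
  have hc2J : (insert 2 J).card = J.card + 1 := Finset.card_insert_of_notMem h2J
  rw [hcK, hc2J, hrec1, hrec2]
  rw [show E.card + 1 - J.card = (E.card - J.card) + 1 by omega]
  rw [show E.card + 1 - (J.card + 1) = E.card - J.card by omega]
  rw [pow_succ]
  push_cast
  ring

lemma Dsum_star (K : Finset ℕ) (hK : ∀ x ∈ K, 2 ≤ x) :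
    Dsum (K.image (· + 1)) = (K.card + 1) * Dsum K + ∑ s ∈ K, Dsum (K.erase s) := by
  have hinj : Set.InjOn (· + 1) ↑K := fun a _ b _ h => by simp only at h; omega
  have hcard : (K.image (· + 1)).card = K.card := Finset.card_image_of_injOn hinj
  -- LHS
  have hL : Dsum (K.image (· + 1))
      = ∑ J ∈ K.powerset, (-1:ℤ)^(K.card - J.card) * ((J.card + 1) * alphaHat J) := by
    rw [Dsum, sum_powerset_image _ _ hinj]
    apply Finset.sum_congr rfl
    intro J hJ
    have hJK : J ⊆ K := Finset.mem_powerset.mp hJ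
    have hinjJ : Set.InjOn (· + 1) ↑J := hinj.mono (by exact_mod_cast hJK)
    have hcardJ : (J.image (· + 1)).card = J.card := Finset.card_image_of_injOn hinjJ
    have hrec : alphaHat (J.image (· + 1)) = (J.card + 1) * alphaHat J := by
      have h2n : 2 ∉ J.image (· + 1) := by
        simp only [Finset.mem_image]
        rintro ⟨x, hx, hx2⟩
        have := hK x (hJK hx); omega
      have := alphaHat_rec (J.image (· + 1))
        (by intro x hx
            simp only [Finset.mem_image] at hx
            obtain ⟨y, hy, rfl⟩ := hx
            have := hK y (hJK hy); omega)
      rw [Finset.erase_eq_of_notMem h2n, Finset.image_image] at this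
      rw [this, hcardJ]
      congr 1
      have : J.image ((· - 1) ∘ (· + 1)) = J.image id := by
        apply Finset.image_congr
        intro x _
        simp
      rw [show ((fun x => x - 1) ∘ fun x => x + 1) = ((· - 1) ∘ (· + 1)) from rfl, this,
        Finset.image_id]
    rw [hcard, hcardJ, hrec]
    push_cast
    ring
  -- RHS second sum
  have hR : ∑ s ∈ K, Dsum (K.erase s)
      = ∑ J ∈ K.powerset, ((K.card : ℤ) - J.card) * ((-1:ℤ)^(K.card - 1 - J.card) * alphaHat J) := by
    have h1 : ∀ s ∈ K, Dsum (K.erase s)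
        = ∑ J ∈ (K.erase s).powerset, (-1:ℤ)^(K.card - 1 - J.card) * alphaHat J := by
      intro s hs
      rw [Dsum, Finset.card_erase_of_mem hs]
    rw [Finset.sum_congr rfl h1,
      pairs0 K (fun s J => (-1:ℤ)^(K.card - 1 - J.card) * alphaHat J)]
    apply Finset.sum_congr rfl
    intro J hJ
    have hJK : J ⊆ K := Finset.mem_powerset.mp hJ
    rw [Finset.sum_const, Finset.card_sdiff_of_subset hJK, nsmul_eq_mul]
    have : ((K.card - J.card : ℕ) : ℤ) = (K.card : ℤ) - J.card := by
      have := Finset.card_le_card hJK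
      push_cast [this]
      ring
    rw [this]
  rw [hL, hR, Dsum, Finset.mul_sum, ← Finset.sum_add_distrib]
  apply Finset.sum_congr rfl
  intro J hJ
  have hJK : J ⊆ K := Finset.mem_powerset.mp hJ
  have hle : J.card ≤ K.card := Finset.card_le_card hJK
  rcases Nat.eq_or_lt_of_le hle with heq | hlt
  · rw [heq]
    simp
  · have h1 : K.card - 1 - J.card = (K.card - J.card) - 1 := by omega
    have h2 : 1 ≤ K.card - J.card := by omega
    rw [h1, neg_one_pow_pred _ h2]
    have : ((K.card : ℤ) - J.card) ≠ 0 := by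
      have : (J.card : ℤ) < K.card := by exact_mod_cast hlt
      omega
    push_cast
    ring

lemma cancelLem (P : Finset ℕ) (g : Finset ℕ → ℤ) :
    ∑ T ∈ P.powerset, (-1:ℤ)^(P.card - T.card) * (∑ x ∈ P \ T, g (insert x T))
      = - ∑ T ∈ P.powerset, (-1:ℤ)^(P.card - T.card) * T.card * g T := by
  set G : Finset ℕ → ℤ := fun J => (-1:ℤ)^(P.card + 1 - J.card) * g J with hGdef
  have step1 : ∑ T ∈ P.powerset, (-1:ℤ)^(P.card - T.card) * (∑ x ∈ P \ T, g (insert x T))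
      = ∑ T ∈ P.powerset, ∑ x ∈ P \ T, G (insert x T) := by
    apply Finset.sum_congr rfl
    intro T hT
    have hTP : T ⊆ P := Finset.mem_powerset.mp hT
    have hle : T.card ≤ P.card := Finset.card_le_card hTP
    rw [Finset.mul_sum]
    apply Finset.sum_congr rfl
    intro x hx
    have hxT : x ∉ T := (Finset.mem_sdiff.mp hx).2
    rw [hGdef]
    simp only
    rw [Finset.card_insert_of_notMem hxT,
      show P.card + 1 - (T.card + 1) = P.card - T.card by omega]
  have step3 : ∀ x ∈ P, ∑ T ∈ (P.erase x).powerset, G (insert x T)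
      = (∑ J ∈ P.powerset, G J) - ∑ J ∈ (P.erase x).powerset, G J := by
    intro x hx
    have h := Finset.sum_powerset_insert (Finset.notMem_erase x P) G
    rw [Finset.insert_erase hx] at h
    rw [h]
    ring
  have step5 : ∑ x ∈ P, ∑ J ∈ (P.erase x).powerset, G J
      = ∑ T ∈ P.powerset, ((P.card : ℤ) - T.card) * G T := by
    rw [pairs0 P (fun x J => G J)]
    apply Finset.sum_congr rfl
    intro T hT
    have hTP : T ⊆ P := Finset.mem_powerset.mp hT
    have hle : T.card ≤ P.card := Finset.card_le_card hTP
    rw [Finset.sum_const, Finset.card_sdiff_of_subset hTP, nsmul_eq_mul]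
    congr 1
    push_cast [hle]
    ring
  rw [step1, ← pairs0 P (fun x T => G (insert x T)), Finset.sum_congr rfl step3,
    Finset.sum_sub_distrib, Finset.sum_const, step5, nsmul_eq_mul]
  rw [Finset.mul_sum, ← Finset.sum_sub_distrib, ← Finset.sum_neg_distrib]
  apply Finset.sum_congr rfl
  intro T hT
  have hTP : T ⊆ P := Finset.mem_powerset.mp hT
  have hle : T.card ≤ P.card := Finset.card_le_card hTP
  rw [hGdef]
  simp only
  rw [show P.card + 1 - T.card = (P.card - T.card) + 1 by omega, pow_succ]
  ring

lemma Dsum_starstar (n : ℕ) (hn : 1 ≤ n) (P : Finset ℕ) (hP : P ⊆ Finset.Icc 2 n) :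
    Dsum (insert (n+1) P) = ((n:ℤ) - P.card) * Dsum P
      + ∑ m ∈ Finset.Icc 2 n \ P, Dsum (insert m P) := by
  have hx : n+1 ∉ P := fun h => by
    have := (Finset.mem_Icc.mp (hP h)).2; omega
  have hcard : ((Finset.Icc 2 n \ P).card : ℤ) = (n:ℤ) - 1 - P.card := by
    have h1 : (Finset.Icc 2 n \ P).card + P.card = n - 1 := by
      rw [Finset.card_sdiff_of_subset hP]
      have h2 : P.card ≤ (Finset.Icc 2 n).card := Finset.card_le_card hP
      rw [Nat.card_Icc] at h2 ⊢
      omega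
    have h2 := congrArg (Nat.cast : ℕ → ℤ) h1
    push_cast at h2
    have h3 : 1 ≤ (n:ℤ) := by exact_mod_cast hn
    omega
  have key : ∀ T ∈ P.powerset,
      (-1:ℤ)^(P.card - T.card) * ((alphaHat (insert (n+1) T) : ℤ) - alphaHat T)
        = ((n:ℤ) - P.card) * ((-1:ℤ)^(P.card - T.card) * alphaHat T)
          + (∑ m ∈ Finset.Icc 2 n \ P,
              (-1:ℤ)^(P.card - T.card) * ((alphaHat (insert m T) : ℤ) - alphaHat T))
          + ((-1:ℤ)^(P.card - T.card) * (∑ x ∈ P \ T, (alphaHat (insert x T) : ℤ)))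
          + (-1:ℤ)^(P.card - T.card) * T.card * alphaHat T := by
    intro T hT
    have hTP : T ⊆ P := Finset.mem_powerset.mp hT
    have hTI : T ⊆ Finset.Icc 2 n := hTP.trans hP
    set c : ℤ := (-1:ℤ)^(P.card - T.card) with hcdef
    set A : ℤ := (alphaHat T : ℤ) with hAdef
    have hA1 : (alphaHat (insert (n+1) T) : ℤ)
        = 2 * A + ∑ x ∈ Finset.Icc 2 n, (alphaHat (insert x T) : ℤ) := by
      have h0 := congrArg (Nat.cast : ℕ → ℤ) (A1 n hn T hTI)
      push_cast at h0
      exact h0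
    have hsd : ∑ x ∈ Finset.Icc 2 n, (alphaHat (insert x T) : ℤ)
        = (∑ x ∈ Finset.Icc 2 n \ P, (alphaHat (insert x T) : ℤ))
          + ∑ x ∈ P, (alphaHat (insert x T) : ℤ) := (Finset.sum_sdiff hP).symm
    have hsd2 : ∑ x ∈ P, (alphaHat (insert x T) : ℤ)
        = (∑ x ∈ P \ T, (alphaHat (insert x T) : ℤ))
          + ∑ x ∈ T, (alphaHat (insert x T) : ℤ) := (Finset.sum_sdiff hTP).symm
    have hsT : ∑ x ∈ T, (alphaHat (insert x T) : ℤ) = (T.card : ℤ) * A := by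
      rw [Finset.sum_congr rfl
        (fun x hx => by rw [Finset.insert_eq_self.mpr hx] : ∀ x ∈ T,
          ((alphaHat (insert x T) : ℤ)) = A)]
      rw [Finset.sum_const, nsmul_eq_mul]
    have hterm2 : ∑ m ∈ Finset.Icc 2 n \ P, c * ((alphaHat (insert m T) : ℤ) - A)
        = c * (∑ m ∈ Finset.Icc 2 n \ P, (alphaHat (insert m T) : ℤ))
          - c * ((Finset.Icc 2 n \ P).card : ℤ) * A := by
      rw [← Finset.mul_sum, Finset.sum_sub_distrib, Finset.sum_const, nsmul_eq_mul]
      ring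
    rw [hterm2, hA1, hsd, hsd2, hsT]
    linear_combination (c * A) * hcard
  rw [E1 P (n+1) hx, Finset.sum_congr rfl key]
  rw [Finset.sum_add_distrib, Finset.sum_add_distrib, Finset.sum_add_distrib]
  rw [cancelLem P (fun J => (alphaHat J : ℤ))]
  rw [Dsum, Finset.mul_sum]
  rw [Finset.sum_comm]
  have hrm : ∀ m ∈ Finset.Icc 2 n \ P, ∑ T ∈ P.powerset,
      (-1:ℤ)^(P.card - T.card) * ((alphaHat (insert m T) : ℤ) - alphaHat T)
        = Dsum (insert m P) := by
    intro m hm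
    exact (E1 P m (Finset.mem_sdiff.mp hm).2).symm
  rw [Finset.sum_congr rfl hrm]
  ring


lemma mem_shF_full (X : Finset ℕ) (hX : ∀ x ∈ X, 2 ≤ x) (a : ℕ) :
    a ∈ shF X ↔ (2 ≤ a ∧ a + 1 ∈ X) := by
  unfold shF
  simp only [Finset.mem_image, Finset.mem_erase]
  constructor
  · rintro ⟨x, ⟨hx2, hxX⟩, rfl⟩
    have := hX x hxX
    constructor
    · omega
    · have hxx : x - 1 + 1 = x := by omega
      rwa [hxx]
  · rintro ⟨h2, h⟩
    exact ⟨a+1, ⟨by omega, h⟩, by omega⟩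

lemma mem_tauim (n : ℕ) (K : Finset ℕ) (hK : K ⊆ Finset.Icc 2 (n+1)) (a : ℕ) :
    a ∈ K.image (fun k => n+3-k) ↔ (2 ≤ a ∧ a ≤ n+1 ∧ n+3-a ∈ K) := by
  simp only [Finset.mem_image]
  constructor
  · rintro ⟨k, hk, rfl⟩
    have hb := Finset.mem_Icc.mp (hK hk)
    refine ⟨by omega, by omega, ?_⟩
    have : n+3-(n+3-k) = k := by omega
    rwa [this]
  · rintro ⟨h2, h1, hm⟩
    exact ⟨n+3-a, hm, by omega⟩

lemma tauim_card (n : ℕ) (K : Finset ℕ) (hK : K ⊆ Finset.Icc 2 (n+1)) :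
    (K.image (fun k => n+3-k)).card = K.card := by
  apply Finset.card_image_of_injOn
  intro x hx y hy h
  have := Finset.mem_Icc.mp (hK hx)
  have := Finset.mem_Icc.mp (hK hy)
  simp only at h
  omega

lemma shF_subset_Icc (X : Finset ℕ) (M : ℕ) (hX : X ⊆ Finset.Icc 2 (M+1)) :
    shF X ⊆ Finset.Icc 2 M := by
  intro a ha
  have hXel : ∀ x ∈ X, 2 ≤ x := fun x hx => (Finset.mem_Icc.mp (hX hx)).1
  rw [mem_shF_full X hXel] at ha
  have := Finset.mem_Icc.mp (hX ha.2)
  simp only [Finset.mem_Icc]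
  omega

theorem MAIN : ∀ n : ℕ, ∀ K ⊆ Finset.Icc 2 (n+1),
    Dsum (Finset.Icc 2 (n+1) \ K.image (fun k => n+3-k)) = Dsum K := by
  intro n
  induction n with
  | zero =>
    intro K hK
    have h1 : Finset.Icc 2 1 = (∅ : Finset ℕ) := by decide
    have hK0 : K = ∅ := by rw [h1] at hK; exact Finset.subset_empty.mp hK
    subst hK0
    rw [Finset.image_empty, Finset.sdiff_empty, h1]
  | succ m ih =>
    intro K hK
    have hKel : ∀ x ∈ K, 2 ≤ x := fun x hx => (Finset.mem_Icc.mp (hK hx)).1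
    have hKub : ∀ x ∈ K, x ≤ m+2 := fun x hx => (Finset.mem_Icc.mp (hK hx)).2
    by_cases h2K : 2 ∈ K
    · -- case (a)
      have hsh : shF K ⊆ Finset.Icc 2 (m+1) := shF_subset_Icc K (m+1) hK
      have hIH := ih (shF K) hsh
      have SA : Finset.Icc 2 (m+1) \ (shF K).image (fun k => m+3-k)
          = Finset.Icc 2 (m+1+1) \ K.image (fun k => m+1+3-k) := by
        ext a
        simp only [Finset.mem_sdiff, Finset.mem_Icc,
          mem_tauim m (shF K) hsh a, mem_tauim (m+1) K hK a,
          mem_shF_full K hKel]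
        by_cases ha : a = m+2
        · subst ha
          have e0 : m+1+3-(m+2) = 2 := by omega
          rw [e0]
          constructor
          · rintro ⟨⟨-, h⟩, -⟩; omega
          · rintro ⟨-, h⟩; exact absurd ⟨by omega, by omega, h2K⟩ h
        · by_cases hbig : a ≤ m+1
          · have e1 : m+3-a+1 = m+4-a := by omega
            have e2 : m+1+3-a = m+4-a := by omega
            rw [e1, e2]
            by_cases h4 : m+4-a ∈ K
            · constructor
              · rintro ⟨⟨h2a, h1a⟩, hno⟩
                exact absurd ⟨h2a, h1a, by omega, h4⟩ hno
              · rintro ⟨⟨h2a, h1a⟩, hno⟩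
                exact absurd ⟨h2a, by omega, h4⟩ hno
            · constructor
              · rintro ⟨⟨h2a, h1a⟩, -⟩
                exact ⟨⟨h2a, by omega⟩, fun ⟨_, _, hc⟩ => h4 hc⟩
              · rintro ⟨⟨h2a, h1a⟩, hno⟩
                exact ⟨⟨h2a, hbig⟩, fun ⟨_, _, _, hc⟩ => h4 hc⟩
          · constructor
            · rintro ⟨⟨h2a, h1a⟩, -⟩
              exact absurd h1a (by omega)
            · rintro ⟨⟨h2a, h1a⟩, -⟩
              exact absurd h1a (by omega)
      rw [← SA, hIH]
      exact (Dsum_sh K hKel h2K).symm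
    · by_cases hm2K : m+2 ∈ K
      · -- case (c) : 2 ∉ K, m+2 ∈ K
        have hK3 : ∀ x ∈ K, 3 ≤ x := by
          intro x hx
          have h2 := hKel x hx
          have : x ≠ 2 := fun h => h2K (h ▸ hx)
          omega
        set K' : Finset ℕ := shF K with hK'def
        have hK'sub : K' ⊆ Finset.Icc 2 (m+1) := shF_subset_Icc K (m+1) hK
        have hK'el : ∀ x ∈ K', 2 ≤ x := fun x hx => (Finset.mem_Icc.mp (hK'sub hx)).1
        have hK'ub : ∀ x ∈ K', x ≤ m+1 := fun x hx => (Finset.mem_Icc.mp (hK'sub hx)).2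
        have hmemK' : ∀ a, a ∈ K' ↔ (2 ≤ a ∧ a+1 ∈ K) := mem_shF_full K hKel
        have hKimg : K'.image (· + 1) = K := by
          ext a
          simp only [Finset.mem_image]
          constructor
          · rintro ⟨b, hb, rfl⟩
            exact ((hmemK' b).mp hb).2
          · intro haK
            have h3 := hK3 a haK
            refine ⟨a-1, (hmemK' (a-1)).mpr ⟨by omega, ?_⟩, by omega⟩
            have : a - 1 + 1 = a := by omega
            rwa [this]
        set P0 : Finset ℕ := Finset.Icc 2 (m+1) \ K'.image (fun k => m+3-k) with hP0def
        have hP0sub : P0 ⊆ Finset.Icc 2 (m+1) := Finset.sdiff_subset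
        have htsub : K'.image (fun k => m+3-k) ⊆ Finset.Icc 2 (m+1) := by
          intro a ha
          rw [mem_tauim m K' hK'sub a] at ha
          simp only [Finset.mem_Icc]
          omega
        have hIH0 : Dsum P0 = Dsum K' := ih K' hK'sub
        have SC1 : ∀ s ∈ K', Finset.Icc 2 (m+1) \ (K'.erase s).image (fun k => m+3-k)
            = insert (m+3-s) P0 := by
          intro s hs
          have hs2 : 2 ≤ s := hK'el s hs
          have hs1 : s ≤ m+1 := hK'ub s hs
          have hesub : K'.erase s ⊆ Finset.Icc 2 (m+1) :=
            (Finset.erase_subset _ _).trans hK'sub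
          ext a
          simp only [Finset.mem_insert, hP0def, Finset.mem_sdiff, Finset.mem_Icc,
            mem_tauim m (K'.erase s) hesub a, mem_tauim m K' hK'sub a,
            Finset.mem_erase]
          by_cases has : a = m+3-s
          · subst has
            have e : m+3-(m+3-s) = s := by omega
            rw [e]
            constructor
            · intro _; exact Or.inl rfl
            · intro _
              refine ⟨⟨by omega, by omega⟩, ?_⟩
              rintro ⟨-, -, hne, -⟩
              exact hne rfl
          · by_cases hbig : 2 ≤ a ∧ a ≤ m+1
            · by_cases hin : m+3-a ∈ K'
              · constructor
                · rintro ⟨-, hno⟩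
                  exact absurd ⟨hbig.1, hbig.2, fun hc => has (by omega), hin⟩ hno
                · rintro (hc | ⟨-, hno⟩)
                  · exact absurd hc has
                  · exact absurd ⟨hbig.1, hbig.2, hin⟩ hno
              · constructor
                · rintro ⟨-, -⟩
                  exact Or.inr ⟨⟨hbig.1, hbig.2⟩, fun ⟨_, _, hc⟩ => hin hc⟩
                · rintro (hc | ⟨-, -⟩)
                  · exact absurd hc has
                  · exact ⟨⟨hbig.1, hbig.2⟩, fun ⟨_, _, _, hc⟩ => hin hc⟩
            · constructor
              · rintro ⟨hr, -⟩
                exact absurd hr hbig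
              · rintro (hc | ⟨hr, -⟩)
                · exact absurd (by omega : 2 ≤ a ∧ a ≤ m+1) hbig
                · exact absurd hr hbig
        have hsum1 : ∑ s ∈ K', Dsum (K'.erase s)
            = ∑ s ∈ K', Dsum (insert (m+3-s) P0) := by
          apply Finset.sum_congr rfl
          intro s hs
          rw [← SC1 s hs]
          exact (ih (K'.erase s) ((Finset.erase_subset _ _).trans hK'sub)).symm
        have himg2 : K'.image (fun s => m+3-s) = Finset.Icc 2 (m+1) \ P0 := by
          rw [hP0def, sdiff_sdiff_right_self]
          rw [inf_eq_inter]
          exact (Finset.inter_eq_right.mpr htsub).symm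
        have hsum2 : ∑ s ∈ K', Dsum (insert (m+3-s) P0)
            = ∑ x ∈ Finset.Icc 2 (m+1) \ P0, Dsum (insert x P0) := by
          rw [← himg2, Finset.sum_image]
          intro x hx y hy h
          have := hK'ub x hx; have := hK'ub y hy
          have := hK'el x hx; have := hK'el y hy
          simp only at h
          omega
        have hstar := Dsum_star K' hK'el
        rw [hKimg] at hstar
        have hss := Dsum_starstar (m+1) (by omega) P0 hP0sub
        have hcard : ((m+1 : ℕ) : ℤ) - P0.card = (K'.card : ℤ) + 1 := by
          have h1 : P0.card + K'.card = m := by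
            rw [hP0def, Finset.card_sdiff_of_subset htsub, tauim_card m K' hK'sub, Nat.card_Icc]
            have : (K'.image (fun k => m+3-k)).card ≤ (Finset.Icc 2 (m+1)).card :=
              Finset.card_le_card htsub
            rw [tauim_card m K' hK'sub, Nat.card_Icc] at this
            omega
          have h2 := congrArg (Nat.cast : ℕ → ℤ) h1
          push_cast at h2
          omega
        have SC4 : insert (m+1+1) P0
            = Finset.Icc 2 (m+1+1) \ K.image (fun k => m+1+3-k) := by
          ext a
          simp only [Finset.mem_insert, hP0def, Finset.mem_sdiff, Finset.mem_Icc,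
            mem_tauim m K' hK'sub a, mem_tauim (m+1) K hK a, hmemK' (m+3-a)]
          by_cases ha : a = m+2
          · subst ha
            have e0 : m+1+3-(m+2) = 2 := by omega
            rw [e0]
            constructor
            · intro _
              exact ⟨⟨by omega, by omega⟩, fun ⟨_, _, hc⟩ => h2K hc⟩
            · intro _
              exact Or.inl rfl
          · by_cases hbig : a ≤ m+1
            · have e1 : m+3-a+1 = m+4-a := by omega
              have e2 : m+1+3-a = m+4-a := by omega
              rw [e1, e2]
              by_cases h4 : m+4-a ∈ K
              · constructor
                · rintro (hc | ⟨⟨h2a, h1a⟩, hno⟩)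
                  · exact absurd hc ha
                  · exact absurd ⟨h2a, h1a, by omega, h4⟩ hno
                · rintro ⟨⟨h2a, h1a⟩, hno⟩
                  exact absurd ⟨h2a, by omega, h4⟩ hno
              · constructor
                · rintro (hc | ⟨⟨h2a, h1a⟩, -⟩)
                  · exact absurd hc ha
                  · exact ⟨⟨h2a, by omega⟩, fun ⟨_, _, hc⟩ => h4 hc⟩
                · rintro ⟨⟨h2a, h1a⟩, hno⟩
                  exact Or.inr ⟨⟨h2a, hbig⟩, fun ⟨_, _, _, hc⟩ => h4 hc⟩
            · constructor
              · rintro (hc | ⟨⟨h2a, h1a⟩, -⟩)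
                · exact absurd hc ha
                · exact absurd h1a (by omega)
              · rintro ⟨⟨h2a, h1a⟩, hno⟩
                exfalso
                omega
        rw [← SC4, hss, hcard, hIH0, ← hsum2, ← hsum1]
        exact hstar.symm
      · -- case (b) : 2 ∉ K, m+2 ∉ K
        set A : Finset ℕ := Finset.Icc 2 (m+1+1) \ K.image (fun k => m+1+3-k) with hAdef
        have hAsub : A ⊆ Finset.Icc 2 (m+1+1) := Finset.sdiff_subset
        have hAel : ∀ x ∈ A, 2 ≤ x := fun x hx => (Finset.mem_Icc.mp (hAsub hx)).1
        have h2A : 2 ∈ A := by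
          rw [hAdef, Finset.mem_sdiff, mem_tauim (m+1) K hK 2]
          refine ⟨by simp [Finset.mem_Icc], ?_⟩
          rintro ⟨-, -, hc⟩
          have e0 : m+1+3-2 = m+2 := by omega
          rw [e0] at hc
          exact hm2K hc
        have hDA : Dsum A = Dsum (shF A) := Dsum_sh A hAel h2A
        have hshA : shF A ⊆ Finset.Icc 2 (m+1) := shF_subset_Icc A (m+1) hAsub
        have hIH := ih (shF A) hshA
        have SB : Finset.Icc 2 (m+1) \ (shF A).image (fun k => m+3-k) = K := by
          ext a
          simp only [Finset.mem_sdiff, Finset.mem_Icc,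
            mem_tauim m (shF A) hshA a, mem_shF_full A hAel]
          by_cases hbig : a ≤ m+1 ∧ 2 ≤ a
          · have e1 : m+3-a+1 = m+4-a := by omega
            rw [e1]
            have hmem4 : (m+4-a ∈ A) ↔ ¬ (a ∈ K) := by
              rw [hAdef, Finset.mem_sdiff, mem_tauim (m+1) K hK (m+4-a), Finset.mem_Icc]
              have e3 : m+1+3-(m+4-a) = a := by omega
              rw [e3]
              constructor
              · rintro ⟨-, hno⟩ haK
                exact hno ⟨by omega, by omega, haK⟩
              · intro haK
                exact ⟨⟨by omega, by omega⟩, fun ⟨_, _, hc⟩ => haK hc⟩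
            by_cases haK : a ∈ K
            · constructor
              · intro _; exact haK
              · intro _
                exact ⟨⟨hbig.2, hbig.1⟩, fun ⟨_, _, _, hc⟩ => (hmem4.mp hc) haK⟩
            · constructor
              · rintro ⟨-, hno⟩
                exact absurd ⟨hbig.2, hbig.1, by omega, hmem4.mpr haK⟩ hno
              · intro hc
                exact absurd hc haK
          · constructor
            · rintro ⟨hr, -⟩
              exact absurd ⟨hr.2, hr.1⟩ hbig
            · intro haK
              exfalso
              have := hKel a haK
              have := hKub a haK
              have hane : a ≠ m+2 := fun h => hm2K (h ▸ haK)
              omega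
        rw [SB] at hIH
        exact hDA.trans hIH.symm

lemma Dsum_def (K : Finset ℕ) : Dsum K
    = ∑ J ∈ K.powerset, (-1:ℤ)^(K.card - J.card) * (alphaHat J : ℤ) := rfl

/-- Combinatorial sum identity coming from mirrorpalindromicity, with `τ(i) = n+3-i`. -/
theorem sum_identity_tau (n : ℕ) (K : Finset ℕ) (hK : K ⊆ Finset.Icc 2 (n+1)) :
    ∑ J ∈ (Finset.Icc 2 (n+1) \ K).powerset,
        (-1 : ℤ) ^ (n - (K ∪ J).card) * alphaHat (J.image (fun j => n + 3 - j)) =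
      ∑ J ∈ K.powerset, (-1 : ℤ) ^ ((K \ J).card) * alphaHat J := by
  have hRHS : ∑ J ∈ K.powerset, (-1:ℤ)^((K \ J).card) * (alphaHat J : ℤ) = Dsum K := by
    rw [Dsum_def]
    apply Finset.sum_congr rfl
    intro J hJ
    rw [Finset.card_sdiff_of_subset (Finset.mem_powerset.mp hJ)]
  have hIccCard : (Finset.Icc 2 (n+1)).card = n := by rw [Nat.card_Icc]; omega
  set E : Finset ℕ := Finset.Icc 2 (n+1) \ K with hE
  have hEsub : E ⊆ Finset.Icc 2 (n+1) := Finset.sdiff_subset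
  have hEcard : E.card = n - K.card := by rw [hE, Finset.card_sdiff_of_subset hK, hIccCard]
  have hKcard : K.card ≤ n := hIccCard ▸ Finset.card_le_card hK
  have hinj : Set.InjOn (fun j => n+3-j) ↑E := by
    intro x hx y hy h
    simp only [Finset.mem_coe] at hx hy
    have := Finset.mem_Icc.mp (hEsub hx)
    have := Finset.mem_Icc.mp (hEsub hy)
    simp only at h
    omega
  have hL2 : ∑ J ∈ E.powerset,
      (-1 : ℤ) ^ (n - (K ∪ J).card) * alphaHat (J.image (fun j => n + 3 - j))
        = Dsum (E.image (fun j => n+3-j)) := by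
    rw [Dsum_def, sum_powerset_image E _ hinj]
    apply Finset.sum_congr rfl
    intro J hJ
    have hJE : J ⊆ E := Finset.mem_powerset.mp hJ
    have hinjJ : Set.InjOn (fun j => n+3-j) ↑J := hinj.mono (by exact_mod_cast hJE)
    have hc1 : (E.image (fun j => n+3-j)).card = E.card := Finset.card_image_of_injOn hinj
    have hc2 : (J.image (fun j => n+3-j)).card = J.card := Finset.card_image_of_injOn hinjJ
    have hdisj : Disjoint K J := by
      rw [Finset.disjoint_left]
      intro a haK haJ
      exact (Finset.mem_sdiff.mp (hJE haJ)).2 haK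
    have hJcard : J.card ≤ E.card := Finset.card_le_card hJE
    rw [hc1, hc2, Finset.card_union_of_disjoint hdisj,
      show n - (K.card + J.card) = E.card - J.card by omega]
  have hSD : E.image (fun j => n+3-j)
      = Finset.Icc 2 (n+1) \ K.image (fun k => n+3-k) := by
    ext a
    constructor
    · intro h
      rw [mem_tauim n E hEsub a] at h
      obtain ⟨h2a, h1a, hmem⟩ := h
      rw [hE, Finset.mem_sdiff] at hmem
      rw [Finset.mem_sdiff, mem_tauim n K hK a]
      exact ⟨Finset.mem_Icc.mpr ⟨h2a, h1a⟩, fun ⟨_, _, hc⟩ => hmem.2 hc⟩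
    · intro h
      rw [Finset.mem_sdiff, mem_tauim n K hK a] at h
      obtain ⟨haIcc, hno⟩ := h
      have hb := Finset.mem_Icc.mp haIcc
      rw [mem_tauim n E hEsub a]
      refine ⟨hb.1, hb.2, ?_⟩
      rw [hE, Finset.mem_sdiff]
      exact ⟨Finset.mem_Icc.mpr ⟨by omega, by omega⟩, fun hc => hno ⟨hb.1, hb.2, hc⟩⟩
  rw [hL2, hSD, hRHS]
  exact MAIN n K hK
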